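/- Let λ ≤ 0, ω > 0 and V : ℝ → ℝ bounded, nonnegative, measurable, with L(V) = -d²/dt² + ω² + λV nonnegative in the quadratic form sense on H¹(ℝ). Then for every u in the Schwartz class on ℝ² (with A = (-By,0), B ∈ ℝ), the quadratic form Q[u] = ∫_{ℝ²} ( |i ∂u/∂x - B y u|² + |∂u/∂y|² + (ω² y² + λ y² V(xy)) |u|² ) dx dy is nonnegative. -/

import Mathlib

open MeasureTheory


private lemma norm_exp_I_mul (B t : ℝ) : ‖Complex.exp (Complex.I * B * t)‖ = 1 := by
  rw [Complex.norm_exp]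
  simp

private lemma aux_sq_integrable {E : Type*} [NormedAddCommGroup E] [NormedSpace ℝ E]
    (f : SchwartzMap (ℝ × ℝ) E) {y : ℝ} (hy : y ≠ 0) :
    Integrable (fun t : ℝ => ‖f (t / y, y)‖ ^ 2) := by
  obtain ⟨C0, hC0⟩ := f.decay 0 0
  obtain ⟨C2, hC2⟩ := f.decay 2 0
  have hC0' : ∀ q, ‖f q‖ ≤ C0 := by
    intro q; simpa using hC0.2 q
  have hC2' : ∀ q : ℝ × ℝ, ‖q‖ ^ 2 * ‖f q‖ ≤ C2 := by
    intro q; simpa using hC2.2 q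
  have hC0nn : 0 ≤ C0 := le_trans (norm_nonneg _) (hC0' 0)
  have hbound : ∀ t : ℝ, ‖f (t / y, y)‖ ^ 2 ≤ (C0 ^ 2 + C0 * C2 * y ^ 2) * (1 + t ^ 2)⁻¹ := by
    intro t
    set q : ℝ × ℝ := (t / y, y) with hq
    have h1 : ‖f q‖ ^ 2 ≤ C0 ^ 2 := pow_le_pow_left₀ (norm_nonneg _) (hC0' q) 2
    have hfst : |t / y| ≤ ‖q‖ := by
      simpa [abs_div, hq] using norm_fst_le q
    have hq2 : (t / y) ^ 2 * ‖f q‖ ≤ C2 := by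
      refine le_trans ?_ (hC2' q)
      have : (t / y) ^ 2 ≤ ‖q‖ ^ 2 := by
        rw [← sq_abs (t / y)]
        exact pow_le_pow_left₀ (abs_nonneg _) hfst 2
      exact mul_le_mul_of_nonneg_right this (norm_nonneg _)
    have ht2 : t ^ 2 * ‖f q‖ ^ 2 ≤ C0 * C2 * y ^ 2 := by
      have hteq : t ^ 2 = (t / y) ^ 2 * y ^ 2 := by
        field_simp
      calc t ^ 2 * ‖f q‖ ^ 2 = ((t / y) ^ 2 * ‖f q‖) * ‖f q‖ * y ^ 2 := by
            rw [hteq]; ring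
        _ ≤ C2 * C0 * y ^ 2 := by
            apply mul_le_mul_of_nonneg_right _ (sq_nonneg y)
            exact mul_le_mul hq2 (hC0' q) (norm_nonneg _)
              (le_trans (by positivity) hq2)
        _ = C0 * C2 * y ^ 2 := by ring
    rw [le_mul_inv_iff₀ (by positivity)]
    nlinarith [h1, ht2]
  refine (integrable_inv_one_add_sq.const_mul (C0 ^ 2 + C0 * C2 * y ^ 2)).mono' ?_ ?_
  · exact ((f.continuous.comp (by fun_prop : Continuous fun t : ℝ => (t / y, y))).norm.pow 2).aestronglyMeasurable
  · refine Filter.Eventually.of_forall fun t => ?_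
    have := hbound t
    simpa [abs_of_nonneg (sq_nonneg (‖f (t/y, y)‖))] using this

private lemma fiber_nonneg (lam ω B : ℝ) (V : ℝ → ℝ)
    (hform : ∀ w : ℝ → ℂ, (∀ t, DifferentiableAt ℝ w t) →
      MemLp w 2 (volume : Measure ℝ) → MemLp (deriv w) 2 (volume : Measure ℝ) →
      0 ≤ ∫ t : ℝ, (‖deriv w t‖ ^ 2 + (ω ^ 2 + lam * V t) * ‖w t‖ ^ 2))
    (u : SchwartzMap (ℝ × ℝ) ℂ) {y : ℝ} (hy : y ≠ 0) :
    0 ≤ ∫ x : ℝ,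
      (‖Complex.I * fderiv ℝ (⇑u) (x, y) (1, 0) - (B : ℂ) * (y : ℂ) * u (x, y)‖ ^ 2
        + (ω ^ 2 * y ^ 2 + lam * y ^ 2 * V (x * y)) * ‖u (x, y)‖ ^ 2) := by
  set w : ℝ → ℂ := fun t => Complex.exp (Complex.I * B * t) * u (t / y, y) with hwdef
  set w' : ℝ → ℂ := fun t => Complex.exp (Complex.I * B * t) * (Complex.I * B) * u (t / y, y)
      + Complex.exp (Complex.I * B * t) * fderiv ℝ (⇑u) (t / y, y) (1 / y, 0) with hw'def
  have hw : ∀ t : ℝ, HasDerivAt w (w' t) t := by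
    intro t
    have h0 : HasDerivAt (fun s : ℝ => Complex.I * B * (s : ℂ)) (Complex.I * B) t := by
      simpa using (Complex.ofRealCLM.hasDerivAt (x := t)).const_mul (Complex.I * (B : ℂ))
    have he := h0.cexp
    have hl : HasDerivAt (fun s : ℝ => ((s / y, y) : ℝ × ℝ)) ((1 / y : ℝ), (0 : ℝ)) t := by
      simpa using ((hasDerivAt_id t).div_const y).prodMk (hasDerivAt_const t y)
    have hu : HasFDerivAt (⇑u) (fderiv ℝ (⇑u) (t / y, y)) (t / y, y) :=
      u.differentiableAt.hasFDerivAt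
    have h2 : HasDerivAt (fun s : ℝ => u (s / y, y)) (fderiv ℝ (⇑u) (t / y, y) (1 / y, 0)) t :=
      hu.comp_hasDerivAt t hl
    exact he.mul h2
  have hderiv : deriv w = w' := funext fun t => (hw t).deriv
  have hdiff : ∀ t, DifferentiableAt ℝ w t := fun t => (hw t).differentiableAt
  -- norms
  have hwnorm : ∀ t, ‖w t‖ = ‖u (t / y, y)‖ := by
    intro t
    simp only [hwdef]
    rw [norm_mul, norm_exp_I_mul, one_mul]
  have hw'norm : ∀ t, ‖w' t‖ = ‖Complex.I * B * u (t / y, y) + fderiv ℝ (⇑u) (t / y, y) (1 / y, 0)‖ := by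
    intro t
    have : w' t = Complex.exp (Complex.I * B * t) *
        (Complex.I * B * u (t / y, y) + fderiv ℝ (⇑u) (t / y, y) (1 / y, 0)) := by
      simp [hw'def]; ring
    rw [this, norm_mul, norm_exp_I_mul, one_mul]
  -- MemLp
  have hcont_du : Continuous fun q : ℝ × ℝ => fderiv ℝ (⇑u) q (1 / y, 0) := by
    have : (fun q : ℝ × ℝ => fderiv ℝ (⇑u) q (1 / y, 0))
        = fun q => (SchwartzMap.fderivCLM ℝ (ℝ × ℝ) ℂ u) q (1 / y, 0) := by
      funext q; simp [SchwartzMap.fderivCLM_apply]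
    rw [this]
    exact (ContinuousLinearMap.apply ℝ ℂ ((1 / y : ℝ), (0 : ℝ))).continuous.comp
      (SchwartzMap.fderivCLM ℝ (ℝ × ℝ) ℂ u).continuous
  have hwcont : Continuous w := by
    apply Continuous.mul
    · exact Complex.continuous_exp.comp (by fun_prop)
    · exact u.continuous.comp (by fun_prop)
  have hw'cont : Continuous w' := by
    apply Continuous.add
    · exact ((Complex.continuous_exp.comp (by fun_prop)).mul continuous_const).mul
        (u.continuous.comp (by fun_prop))
    · exact (Complex.continuous_exp.comp (by fun_prop)).mul
        (hcont_du.comp (by fun_prop : Continuous fun t : ℝ => ((t / y, y) : ℝ × ℝ)))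
  have hmw : MemLp w 2 (volume : Measure ℝ) := by
    rw [memLp_two_iff_integrable_sq_norm hwcont.aestronglyMeasurable]
    have : (fun t => ‖w t‖ ^ 2) = fun t => ‖u (t / y, y)‖ ^ 2 := funext fun t => by rw [hwnorm]
    rw [this]
    exact aux_sq_integrable u hy
  have hmw' : MemLp (deriv w) 2 (volume : Measure ℝ) := by
    rw [hderiv, memLp_two_iff_integrable_sq_norm hw'cont.aestronglyMeasurable]
    set D := SchwartzMap.fderivCLM ℝ (ℝ × ℝ) ℂ u with hD
    refine Integrable.mono' (g := fun t => 2 * B ^ 2 * ‖u (t / y, y)‖ ^ 2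
        + 2 * (1 / y) ^ 2 * ‖D (t / y, y)‖ ^ 2) ?_ ?_ ?_
    · exact ((aux_sq_integrable u hy).const_mul _).add ((aux_sq_integrable D hy).const_mul _)
    · exact ((hw'cont.norm.pow 2)).aestronglyMeasurable
    · refine Filter.Eventually.of_forall fun t => ?_
      have h1 : ‖w' t‖ ≤ |B| * ‖u (t / y, y)‖ + |1 / y| * ‖D (t / y, y)‖ := by
        rw [hw'norm t]
        refine le_trans (norm_add_le _ _) (add_le_add ?_ ?_)
        · rw [norm_mul, norm_mul, Complex.norm_I, one_mul, Complex.norm_real, Real.norm_eq_abs]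
        · have : fderiv ℝ (⇑u) (t / y, y) = D (t / y, y) := by simp [hD, SchwartzMap.fderivCLM_apply]
          rw [this]
          calc ‖D (t / y, y) (1 / y, 0)‖ ≤ ‖D (t / y, y)‖ * ‖((1 / y : ℝ), (0 : ℝ))‖ :=
                (D (t / y, y)).le_opNorm _
            _ = |1 / y| * ‖D (t / y, y)‖ := by
                have hn : ‖((1 / y : ℝ), (0 : ℝ))‖ = |1 / y| := by
                  rw [Prod.norm_def]
                  simp only [Real.norm_eq_abs, norm_zero]
                  exact max_eq_left (abs_nonneg _)
                rw [hn, mul_comm]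
      have h2 : ‖w' t‖ ^ 2 ≤ (|B| * ‖u (t / y, y)‖ + |1 / y| * ‖D (t / y, y)‖) ^ 2 :=
        pow_le_pow_left₀ (norm_nonneg _) h1 2
      have habs : ‖‖w' t‖ ^ 2‖ = ‖w' t‖ ^ 2 := abs_of_nonneg (sq_nonneg _)
      rw [habs]
      nlinarith [sq_nonneg (|B| * ‖u (t / y, y)‖ - |1 / y| * ‖D (t / y, y)‖), sq_abs B, sq_abs (1 / y)]
  have happ := hform w hdiff hmw hmw'
  -- pointwise identity
  have hpt : ∀ x : ℝ,
      ‖Complex.I * fderiv ℝ (⇑u) (x, y) (1, 0) - (B : ℂ) * (y : ℂ) * u (x, y)‖ ^ 2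
        + (ω ^ 2 * y ^ 2 + lam * y ^ 2 * V (x * y)) * ‖u (x, y)‖ ^ 2
      = y ^ 2 * (‖deriv w (x * y)‖ ^ 2 + (ω ^ 2 + lam * V (x * y)) * ‖w (x * y)‖ ^ 2) := by
    intro x
    have hxy : x * y / y = x := mul_div_cancel_right₀ x hy
    have hA : ‖w (x * y)‖ = ‖u (x, y)‖ := by rw [hwnorm, hxy]
    rw [hderiv]
    have hw'n : ‖w' (x * y)‖ = ‖Complex.I * B * u (x, y) + fderiv ℝ (⇑u) (x, y) (1 / y, 0)‖ := by
      rw [hw'norm, hxy]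
    have hsm : fderiv ℝ (⇑u) (x, y) (1 / y, 0) = (1 / y : ℝ) • fderiv ℝ (⇑u) (x, y) (1, 0) := by
      have : ((1 / y : ℝ), (0 : ℝ)) = (1 / y : ℝ) • ((1 : ℝ), (0 : ℝ)) := by
        simp [Prod.smul_mk]
      rw [this, ContinuousLinearMap.map_smul]
    have key : ‖Complex.I * fderiv ℝ (⇑u) (x, y) (1, 0) - (B : ℂ) * (y : ℂ) * u (x, y)‖
        = |y| * ‖w' (x * y)‖ := by
      rw [hw'n, hsm]
      set a := fderiv ℝ (⇑u) (x, y) (1, 0)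
      set c := u (x, y)
      have e1 : Complex.I * a - (B : ℂ) * (y : ℂ) * c
          = Complex.I * (a + Complex.I * B * y * c) := by
        rw [mul_add]
        rw [show Complex.I * (Complex.I * B * y * c) = -((B:ℂ) * y * c) by
          rw [← mul_assoc, ← mul_assoc, ← mul_assoc, Complex.I_mul_I]; ring]
        ring
      have e2 : a + Complex.I * B * y * c
          = (y : ℂ) * (Complex.I * B * c + (1 / y : ℝ) • a) := by
        rw [Complex.real_smul, mul_add]
        push_cast
        rw [show (y : ℂ) * (1 / (y : ℂ) * a) = ((y : ℂ) * (1 / (y : ℂ))) * a from by ring,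
          mul_one_div, div_self (Complex.ofReal_ne_zero.mpr hy), one_mul]
        ring
      rw [e1, norm_mul, Complex.norm_I, one_mul, e2, norm_mul, Complex.norm_real,
        Real.norm_eq_abs]
    have hysq : y ^ 2 * ‖w' (x * y)‖ ^ 2 = (|y| * ‖w' (x * y)‖) ^ 2 := by
      rw [mul_pow, sq_abs]
    rw [mul_add, hysq, ← key, hA]
    ring
  calc (0 : ℝ) ≤ y ^ 2 * (|y⁻¹| • ∫ t : ℝ, (‖deriv w t‖ ^ 2 + (ω ^ 2 + lam * V t) * ‖w t‖ ^ 2)) := by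
        rw [smul_eq_mul]
        exact mul_nonneg (sq_nonneg y) (mul_nonneg (abs_nonneg _) happ)
    _ = y ^ 2 * ∫ x : ℝ, (‖deriv w (x * y)‖ ^ 2 + (ω ^ 2 + lam * V (x * y)) * ‖w (x * y)‖ ^ 2) := by
        rw [Measure.integral_comp_mul_right (fun t => ‖deriv w t‖ ^ 2 + (ω ^ 2 + lam * V t) * ‖w t‖ ^ 2) y]
    _ = ∫ x : ℝ, (‖Complex.I * fderiv ℝ (⇑u) (x, y) (1, 0) - (B : ℂ) * (y : ℂ) * u (x, y)‖ ^ 2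
          + (ω ^ 2 * y ^ 2 + lam * y ^ 2 * V (x * y)) * ‖u (x, y)‖ ^ 2) := by
        rw [← integral_const_mul]
        exact integral_congr_ae (Filter.Eventually.of_forall fun x => (hpt x).symm)

set_option maxHeartbeats 1000000 in
/-- Positivity of the quadratic form of the magnetic operator
H(A) = (i∇+A)² + ω²y² + λy²V(xy) in the Landau gauge A = (-By, 0),
assuming L(V) = -d²/dt² + ω² + λV is nonnegative. -/
theorem stmt_11 (lam ω B : ℝ) (hlam : lam ≤ 0) (hω : 0 < ω)
    (V : ℝ → ℝ) (hVmeas : Measurable V) (hVnonneg : ∀ t, 0 ≤ V t)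
    (hVbdd : ∃ C : ℝ, ∀ t, |V t| ≤ C)
    (hform : ∀ w : ℝ → ℂ, (∀ t, DifferentiableAt ℝ w t) →
      MemLp w 2 (volume : Measure ℝ) → MemLp (deriv w) 2 (volume : Measure ℝ) →
      0 ≤ ∫ t : ℝ, (‖deriv w t‖ ^ 2 + (ω ^ 2 + lam * V t) * ‖w t‖ ^ 2)) :
    ∀ u : SchwartzMap (ℝ × ℝ) ℂ,
      0 ≤ ∫ p : ℝ × ℝ,
        (‖Complex.I * fderiv ℝ (fun q => u q) p (1, 0) - (B : ℂ) * (p.2 : ℂ) * u p‖ ^ 2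
          + ‖fderiv ℝ (fun q => u q) p (0, 1)‖ ^ 2
          + (ω ^ 2 * p.2 ^ 2 + lam * p.2 ^ 2 * V (p.1 * p.2)) * ‖u p‖ ^ 2) := by
  intro u
  obtain ⟨CV, hCV⟩ := hVbdd
  have hCVnn : 0 ≤ CV := le_trans (abs_nonneg _) (hCV 0)
  set D := SchwartzMap.fderivCLM ℝ (ℝ × ℝ) ℂ u with hD
  have hDeq : ∀ p : ℝ × ℝ, fderiv ℝ (⇑u) p = D p := fun p => by
    simp [hD, SchwartzMap.fderivCLM_apply]
  obtain ⟨Cu, hCu⟩ := u.decay 0 0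
  have hCu' : ∀ q, ‖u q‖ ≤ Cu := fun q => by simpa using hCu.2 q
  obtain ⟨CD, hCD⟩ := D.decay 0 0
  have hCD' : ∀ q, ‖D q‖ ≤ CD := fun q => by simpa using hCD.2 q
  have hCunn : 0 ≤ Cu := le_trans (norm_nonneg _) (hCu' 0)
  have hCDnn : 0 ≤ CD := le_trans (norm_nonneg _) (hCD' 0)
  set F : ℝ × ℝ → ℝ := fun p =>
    ‖Complex.I * fderiv ℝ (⇑u) p (1, 0) - (B : ℂ) * (p.2 : ℂ) * u p‖ ^ 2
      + (ω ^ 2 * p.2 ^ 2 + lam * p.2 ^ 2 * V (p.1 * p.2)) * ‖u p‖ ^ 2 with hF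
  set T2 : ℝ × ℝ → ℝ := fun p => ‖fderiv ℝ (⇑u) p (0, 1)‖ ^ 2 with hT2
  -- norms of basis vectors
  have hn10 : ‖((1 : ℝ), (0 : ℝ))‖ = 1 := by
    rw [Prod.norm_def]; simp
  have hn01 : ‖((0 : ℝ), (1 : ℝ))‖ = 1 := by
    rw [Prod.norm_def]; simp
  -- continuity of derivative applications
  have hcont1 : Continuous fun p : ℝ × ℝ => fderiv ℝ (⇑u) p ((1 : ℝ), (0 : ℝ)) := by
    have : (fun p : ℝ × ℝ => fderiv ℝ (⇑u) p ((1 : ℝ), (0 : ℝ)))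
        = fun p => (ContinuousLinearMap.apply ℝ ℂ ((1 : ℝ), (0 : ℝ))) (D p) := by
      funext p; rw [hDeq]; rfl
    rw [this]; exact (ContinuousLinearMap.apply ℝ ℂ _).continuous.comp D.continuous
  have hcont2 : Continuous fun p : ℝ × ℝ => fderiv ℝ (⇑u) p ((0 : ℝ), (1 : ℝ)) := by
    have : (fun p : ℝ × ℝ => fderiv ℝ (⇑u) p ((0 : ℝ), (1 : ℝ)))
        = fun p => (ContinuousLinearMap.apply ℝ ℂ ((0 : ℝ), (1 : ℝ))) (D p) := by
      funext p; rw [hDeq]; rfl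
    rw [this]; exact (ContinuousLinearMap.apply ℝ ℂ _).continuous.comp D.continuous
  -- Integrability of T2
  have hT2int : Integrable T2 (volume : Measure (ℝ × ℝ)) := by
    refine Integrable.mono' ((D.integrable (μ := volume)).norm.const_mul CD) ?_ ?_
    · exact ((hcont2.norm.pow 2)).aestronglyMeasurable
    · refine Filter.Eventually.of_forall fun p => ?_
      have h1 : ‖fderiv ℝ (⇑u) p (0, 1)‖ ≤ ‖D p‖ := by
        rw [hDeq]
        calc ‖D p ((0 : ℝ), (1 : ℝ))‖ ≤ ‖D p‖ * ‖((0 : ℝ), (1 : ℝ))‖ := (D p).le_opNorm _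
          _ = ‖D p‖ := by rw [hn01, mul_one]
      have h2 : ‖fderiv ℝ (⇑u) p (0, 1)‖ ≤ CD := h1.trans (hCD' p)
      have : ‖T2 p‖ = ‖fderiv ℝ (⇑u) p (0, 1)‖ ^ 2 := abs_of_nonneg (sq_nonneg _)
      rw [this, sq]
      exact mul_le_mul h2 h1 (norm_nonneg _) hCDnn
  -- Integrability of F
  have hFint : Integrable F (volume : Measure (ℝ × ℝ)) := by
    refine Integrable.mono'
      (g := fun p => 2 * CD * ‖D p‖
        + (2 * B ^ 2 * Cu + (ω ^ 2 + |lam| * CV) * Cu) * (‖p‖ ^ 2 * ‖u p‖)) ?_ ?_ ?_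
    · exact (((D.integrable (μ := volume)).norm.const_mul _)).add
        ((u.integrable_pow_mul volume 2).const_mul _)
    · refine AEStronglyMeasurable.add ?_ ?_
      · exact ((((continuous_const.mul hcont1 : Continuous fun p : ℝ × ℝ => Complex.I * fderiv ℝ (⇑u) p ((1:ℝ),(0:ℝ)))).sub
          ((continuous_const.mul (Complex.continuous_ofReal.comp continuous_snd)).mul
            u.continuous)).norm.pow 2).aestronglyMeasurable
      · refine AEStronglyMeasurable.mul ?_ ((u.continuous.norm.pow 2)).aestronglyMeasurable
        refine Measurable.aestronglyMeasurable ?_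
        exact ((measurable_const.mul ((measurable_snd.pow_const 2))).add
          ((measurable_const.mul (measurable_snd.pow_const 2)).mul
            (hVmeas.comp (measurable_fst.mul measurable_snd))))
    · refine Filter.Eventually.of_forall fun p => ?_
      have hb2 : |p.2| ≤ ‖p‖ := by simpa using norm_snd_le p
      have hp2 : p.2 ^ 2 ≤ ‖p‖ ^ 2 := by
        rw [← sq_abs p.2]; exact pow_le_pow_left₀ (abs_nonneg _) hb2 2
      have hDp : ‖fderiv ℝ (⇑u) p (1, 0)‖ ≤ ‖D p‖ := by
        rw [hDeq]
        calc ‖D p ((1 : ℝ), (0 : ℝ))‖ ≤ ‖D p‖ * ‖((1 : ℝ), (0 : ℝ))‖ := (D p).le_opNorm _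
          _ = ‖D p‖ := by rw [hn10, mul_one]
      have h1 : ‖Complex.I * fderiv ℝ (⇑u) p (1, 0) - (B : ℂ) * (p.2 : ℂ) * u p‖
          ≤ ‖D p‖ + |B| * (‖p‖ * ‖u p‖) := by
        refine (norm_sub_le _ _).trans (add_le_add ?_ ?_)
        · rw [norm_mul, Complex.norm_I, one_mul]; exact hDp
        · rw [norm_mul, norm_mul, Complex.norm_real, Complex.norm_real,
            Real.norm_eq_abs, Real.norm_eq_abs, mul_assoc]
          exact mul_le_mul_of_nonneg_left
            (mul_le_mul_of_nonneg_right hb2 (norm_nonneg _)) (abs_nonneg B)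
      have ht1 : ‖Complex.I * fderiv ℝ (⇑u) p (1, 0) - (B : ℂ) * (p.2 : ℂ) * u p‖ ^ 2
          ≤ 2 * ‖D p‖ ^ 2 + 2 * B ^ 2 * (‖p‖ * ‖u p‖) ^ 2 := by
        have := pow_le_pow_left₀ (norm_nonneg _) h1 2
        nlinarith [sq_nonneg (‖D p‖ - |B| * (‖p‖ * ‖u p‖)), sq_abs B]
      have hcoef : |ω ^ 2 * p.2 ^ 2 + lam * p.2 ^ 2 * V (p.1 * p.2)|
          ≤ (ω ^ 2 + |lam| * CV) * ‖p‖ ^ 2 := by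
        have hV := hCV (p.1 * p.2)
        have habs : |ω ^ 2 * p.2 ^ 2 + lam * p.2 ^ 2 * V (p.1 * p.2)|
            ≤ ω ^ 2 * p.2 ^ 2 + |lam| * p.2 ^ 2 * CV := by
          refine (abs_add_le _ _).trans (add_le_add ?_ ?_)
          · rw [abs_of_nonneg (by positivity)]
          · rw [abs_mul, abs_mul, abs_of_nonneg (sq_nonneg p.2)]
            exact mul_le_mul_of_nonneg_left hV (by positivity) |>.trans
              (by rw [mul_assoc])
        refine habs.trans ?_
        have h1 : ω ^ 2 * p.2 ^ 2 ≤ ω ^ 2 * ‖p‖ ^ 2 :=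
          mul_le_mul_of_nonneg_left hp2 (sq_nonneg ω)
        have h2 : |lam| * p.2 ^ 2 * CV ≤ |lam| * CV * ‖p‖ ^ 2 := by
          calc |lam| * p.2 ^ 2 * CV = (|lam| * CV) * p.2 ^ 2 := by ring
            _ ≤ (|lam| * CV) * ‖p‖ ^ 2 :=
              mul_le_mul_of_nonneg_left hp2 (by positivity)
        calc ω ^ 2 * p.2 ^ 2 + |lam| * p.2 ^ 2 * CV
            ≤ ω ^ 2 * ‖p‖ ^ 2 + |lam| * CV * ‖p‖ ^ 2 := add_le_add h1 h2
          _ = (ω ^ 2 + |lam| * CV) * ‖p‖ ^ 2 := by ring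
      have hDp' : ‖D p‖ ≤ CD := hCD' p
      have hup : ‖u p‖ ≤ Cu := hCu' p
      have hDsq : ‖D p‖ ^ 2 ≤ CD * ‖D p‖ := by
        rw [sq]; exact mul_le_mul_of_nonneg_right hDp' (norm_nonneg _)
      have husq : ‖u p‖ ^ 2 ≤ Cu * ‖u p‖ := by
        rw [sq]; exact mul_le_mul_of_nonneg_right hup (norm_nonneg _)
      have hnpusq : ‖p‖ ^ 2 * ‖u p‖ ^ 2 ≤ Cu * (‖p‖ ^ 2 * ‖u p‖) := by
        calc ‖p‖ ^ 2 * ‖u p‖ ^ 2 ≤ ‖p‖ ^ 2 * (Cu * ‖u p‖) :=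
            mul_le_mul_of_nonneg_left husq (sq_nonneg _)
          _ = Cu * (‖p‖ ^ 2 * ‖u p‖) := by ring
      have hFabs : ‖F p‖ ≤ ‖Complex.I * fderiv ℝ (⇑u) p (1, 0) - (B : ℂ) * (p.2 : ℂ) * u p‖ ^ 2
          + |ω ^ 2 * p.2 ^ 2 + lam * p.2 ^ 2 * V (p.1 * p.2)| * ‖u p‖ ^ 2 := by
        rw [hF]
        refine (abs_add_le _ _).trans (add_le_add ?_ ?_)
        · rw [abs_of_nonneg (sq_nonneg _)]
        · rw [abs_mul, abs_of_nonneg (sq_nonneg (‖u p‖))]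
      have hc2 : |ω ^ 2 * p.2 ^ 2 + lam * p.2 ^ 2 * V (p.1 * p.2)| * ‖u p‖ ^ 2
          ≤ (ω ^ 2 + |lam| * CV) * Cu * (‖p‖ ^ 2 * ‖u p‖) := by
        calc |ω ^ 2 * p.2 ^ 2 + lam * p.2 ^ 2 * V (p.1 * p.2)| * ‖u p‖ ^ 2
            ≤ ((ω ^ 2 + |lam| * CV) * ‖p‖ ^ 2) * ‖u p‖ ^ 2 :=
              mul_le_mul_of_nonneg_right hcoef (sq_nonneg _)
          _ = (ω ^ 2 + |lam| * CV) * (‖p‖ ^ 2 * ‖u p‖ ^ 2) := by ring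
          _ ≤ (ω ^ 2 + |lam| * CV) * (Cu * (‖p‖ ^ 2 * ‖u p‖)) :=
              mul_le_mul_of_nonneg_left hnpusq (by positivity)
          _ = (ω ^ 2 + |lam| * CV) * Cu * (‖p‖ ^ 2 * ‖u p‖) := by ring
      have hsqprod : (‖p‖ * ‖u p‖) ^ 2 ≤ Cu * (‖p‖ ^ 2 * ‖u p‖) := by
        calc (‖p‖ * ‖u p‖) ^ 2 = ‖p‖ ^ 2 * ‖u p‖ ^ 2 := by ring
          _ ≤ Cu * (‖p‖ ^ 2 * ‖u p‖) := hnpusq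
      have h2a : 2 * ‖D p‖ ^ 2 ≤ 2 * CD * ‖D p‖ := by linarith
      have h2b : 2 * B ^ 2 * (‖p‖ * ‖u p‖) ^ 2 ≤ 2 * B ^ 2 * Cu * (‖p‖ ^ 2 * ‖u p‖) := by
        calc 2 * B ^ 2 * (‖p‖ * ‖u p‖) ^ 2 = (2 * B ^ 2) * ((‖p‖ * ‖u p‖) ^ 2) := by ring
          _ ≤ (2 * B ^ 2) * (Cu * (‖p‖ ^ 2 * ‖u p‖)) :=
              mul_le_mul_of_nonneg_left hsqprod (by positivity)
          _ = 2 * B ^ 2 * Cu * (‖p‖ ^ 2 * ‖u p‖) := by ring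
      calc ‖F p‖ ≤ ‖Complex.I * fderiv ℝ (⇑u) p (1, 0) - (B : ℂ) * (p.2 : ℂ) * u p‖ ^ 2
            + |ω ^ 2 * p.2 ^ 2 + lam * p.2 ^ 2 * V (p.1 * p.2)| * ‖u p‖ ^ 2 := hFabs
        _ ≤ (2 * CD * ‖D p‖ + 2 * B ^ 2 * Cu * (‖p‖ ^ 2 * ‖u p‖))
            + (ω ^ 2 + |lam| * CV) * Cu * (‖p‖ ^ 2 * ‖u p‖) :=
            add_le_add (ht1.trans (by linarith)) hc2
        _ = 2 * CD * ‖D p‖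
            + (2 * B ^ 2 * Cu + (ω ^ 2 + |lam| * CV) * Cu) * (‖p‖ ^ 2 * ‖u p‖) := by ring
  -- split the integral
  have hsplit : ∀ p : ℝ × ℝ,
      ‖Complex.I * fderiv ℝ (fun q => u q) p (1, 0) - (B : ℂ) * (p.2 : ℂ) * u p‖ ^ 2
        + ‖fderiv ℝ (fun q => u q) p (0, 1)‖ ^ 2
        + (ω ^ 2 * p.2 ^ 2 + lam * p.2 ^ 2 * V (p.1 * p.2)) * ‖u p‖ ^ 2
      = F p + T2 p := by
    intro p; rw [hF, hT2]; ring
  calc (0 : ℝ) ≤ (∫ p : ℝ × ℝ, F p) + ∫ p : ℝ × ℝ, T2 p := by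
        refine add_nonneg ?_ (integral_nonneg fun p => sq_nonneg _)
        -- Fubini
        have hF2 : Integrable F ((volume : Measure ℝ).prod (volume : Measure ℝ)) := by
          rwa [← MeasureTheory.Measure.volume_eq_prod]
        have heq : (∫ p : ℝ × ℝ, F p) = ∫ y : ℝ, ∫ x : ℝ, F (x, y) := by
          rw [MeasureTheory.Measure.volume_eq_prod]
          exact integral_prod_symm F hF2
        rw [heq]
        refine integral_nonneg fun y => ?_
        by_cases hy : y = 0
        · subst hy
          refine integral_nonneg fun x => ?_
          rw [hF]
          norm_num
        · exact fiber_nonneg lam ω B V hform u hy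
    _ = ∫ p : ℝ × ℝ, (F p + T2 p) := (integral_add hFint hT2int).symm
    _ = _ := integral_congr_ae (Filter.Eventually.of_forall fun p => (hsplit p).symm)
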